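/- Let b ≥ 0 and ι ≥ 0 be real numbers and set ρ = b + ι. For every real t > 0 and every complex δ, the function u(t) = |sinh t|^δ = (sinh t)^δ satisfies u''(t) + (2b·coth t + 2ι·coth 2t)·u'(t) − δ(δ + 2ρ)·u(t) = δ(δ − 1 + ι + 2b)·(sinh t)^{δ−2}. -/

import Mathlib

/-- Rank-one Bernstein–Sato identity for `u(t) = (sinh t)^δ`, `t > 0`:
`u'' + (2b coth t + 2ι coth 2t) u' − δ(δ+2ρ) u = δ(δ−1+ι+2b)(sinh t)^{δ−2}`,
where `ρ = b + ι`. -/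
theorem rank_one_BS_sinh (b ι : ℝ) (hb : 0 ≤ b) (hι : 0 ≤ ι) (t : ℝ) (ht : 0 < t) (δ : ℂ) :
    deriv (deriv (fun s : ℝ => Complex.exp (δ * (Real.log (Real.sinh s) : ℂ)))) t
      + ((2 * b * (Real.cosh t / Real.sinh t)
            + 2 * ι * (Real.cosh (2 * t) / Real.sinh (2 * t)) : ℝ) : ℂ)
          * deriv (fun s : ℝ => Complex.exp (δ * (Real.log (Real.sinh s) : ℂ))) t
      - δ * (δ + 2 * ((b : ℂ) + (ι : ℂ)))
          * Complex.exp (δ * (Real.log (Real.sinh t) : ℂ))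
    = δ * (δ - 1 + (ι : ℂ) + 2 * (b : ℂ))
        * Complex.exp ((δ - 2) * (Real.log (Real.sinh t) : ℂ)) := by
  set f : ℝ → ℂ := fun s => Complex.exp (δ * (Real.log (Real.sinh s) : ℂ)) with hfdef
  have key : ∀ s : ℝ, 0 < s →
      HasDerivAt f (δ * ((Real.cosh s / Real.sinh s : ℝ) : ℂ) * f s) s := by
    intro s hs
    have hSs : (0:ℝ) < Real.sinh s := Real.sinh_pos_iff.mpr hs
    have h1 : HasDerivAt (fun x : ℝ => Real.log (Real.sinh x))
        (Real.cosh s / Real.sinh s) s := by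
      simpa using (Real.hasDerivAt_sinh s).log hSs.ne'
    have h2 := h1.ofReal_comp
    have h3 := ((h2.const_mul δ)).cexp
    convert h3 using 1
    ring
  have hS : (0:ℝ) < Real.sinh t := Real.sinh_pos_iff.mpr ht
  have hC : (0:ℝ) < Real.cosh t := Real.cosh_pos t
  have hev : ∀ᶠ s in nhds t, deriv f s = δ * ((Real.cosh s / Real.sinh s : ℝ) : ℂ) * f s := by
    filter_upwards [eventually_gt_nhds ht] with s hs
    exact (key s hs).deriv
  have hd1 : deriv f t = δ * ((Real.cosh t / Real.sinh t : ℝ) : ℂ) * f t := (key t ht).deriv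
  -- second derivative
  have hq : HasDerivAt (fun s : ℝ => Real.cosh s / Real.sinh s)
      ((Real.sinh t * Real.sinh t - Real.cosh t * Real.cosh t) / Real.sinh t ^ 2) t :=
    (Real.hasDerivAt_cosh t).div (Real.hasDerivAt_sinh t) hS.ne'
  have hg : HasDerivAt (fun s : ℝ => δ * ((Real.cosh s / Real.sinh s : ℝ) : ℂ) * f s)
      (δ * (((Real.sinh t * Real.sinh t - Real.cosh t * Real.cosh t) / Real.sinh t ^ 2 : ℝ) : ℂ)
          * f t
        + δ * ((Real.cosh t / Real.sinh t : ℝ) : ℂ)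
          * (δ * ((Real.cosh t / Real.sinh t : ℝ) : ℂ) * f t)) t :=
    (hq.ofReal_comp.const_mul δ).mul (key t ht)
  have hd2 : deriv (deriv f) t
      = δ * (((Real.sinh t * Real.sinh t - Real.cosh t * Real.cosh t) / Real.sinh t ^ 2 : ℝ) : ℂ)
          * f t
        + δ * ((Real.cosh t / Real.sinh t : ℝ) : ℂ)
          * (δ * ((Real.cosh t / Real.sinh t : ℝ) : ℂ) * f t) := by
    rw [Filter.EventuallyEq.deriv_eq hev]
    exact hg.deriv
  -- rewrite RHS exponential
  have hrhs : Complex.exp ((δ - 2) * (Real.log (Real.sinh t) : ℂ))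
      = f t / ((Real.sinh t : ℂ))^2 := by
    rw [hfdef, sub_mul, Complex.exp_sub]
    congr 1
    have : ((2:ℂ) * (Real.log (Real.sinh t) : ℂ)) = ((2 * Real.log (Real.sinh t) : ℝ) : ℂ) := by
      push_cast; ring
    rw [this, ← Complex.ofReal_exp]
    norm_cast
    rw [two_mul, Real.exp_add, Real.exp_log hS]; ring
  rw [hd1, hd2, hrhs]
  -- trig identities
  have hcosh2 : Real.cosh (2*t) = Real.cosh t ^ 2 + Real.sinh t ^ 2 := Real.cosh_two_mul t
  have hsinh2 : Real.sinh (2*t) = 2 * Real.sinh t * Real.cosh t := Real.sinh_two_mul t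
  have hsq : Real.cosh t ^ 2 = Real.sinh t ^ 2 + 1 := by
    have := Real.cosh_sq_sub_sinh_sq t; nlinarith
  rw [hcosh2, hsinh2]
  have hSC : (Real.sinh t : ℂ) ≠ 0 := by exact_mod_cast hS.ne'
  have hCC : (Real.cosh t : ℂ) ≠ 0 := by exact_mod_cast hC.ne'
  have hsqC : (Real.cosh t : ℂ) ^ 2 = (Real.sinh t : ℂ) ^ 2 + 1 := by exact_mod_cast hsq
  simp only [Complex.ofReal_div, Complex.ofReal_mul, Complex.ofReal_add,
    Complex.ofReal_sub, Complex.ofReal_pow, Complex.ofReal_ofNat, Complex.ofReal_one] at *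
  set S : ℂ := ((Real.sinh t : ℝ) : ℂ) with hSdef
  set C : ℂ := ((Real.cosh t : ℝ) : ℂ) with hCdef
  set F : ℂ := f t with hFdef
  have h2 : ((2:ℂ)) ≠ 0 := two_ne_zero
  have hprod : S * (2 * S * C) * S ≠ 0 := by
    exact mul_ne_zero (mul_ne_zero hSC (by exact mul_ne_zero (mul_ne_zero h2 hSC) hCC)) hSC
  field_simp [hSC, hCC, hprod]
  linear_combination (δ * F * (δ - 1 + 2*(b:ℂ) + (ι:ℂ))) * hsqC
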